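/- Let A and Ã be symmetric n×n real matrices, both of rank at least k, with eigenvalues λ₁ ≥ … ≥ λₙ and λ̃₁ ≥ … ≥ λ̃ₙ respectively. If ‖A − Ã‖₂ < λ_k − λ_{k+1}, then d₂(V_{A,k}, V_{Ã,k}) ≤ ‖A − Ã‖₂ / (λ_k − λ_{k+1} − ‖A − Ã‖₂). -/

import Mathlib

open Matrix MeasureTheory

noncomputable section

/-- Euclidean norm of a vector in `ℝ^n`. -/
def vnorm {n : ℕ} (v : Fin n → ℝ) : ℝ := Real.sqrt (∑ i, v i ^ 2)

/-- Spectral norm of a matrix (operator norm as a map between Euclidean spaces). -/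
def spec {m n : ℕ} (M : Matrix (Fin m) (Fin n) ℝ) : ℝ :=
  ‖LinearMap.toContinuousLinearMap (Matrix.toEuclideanLin M)‖

/-- The four Moore-Penrose conditions. -/
def IsMP {m n : ℕ} (X : Matrix (Fin m) (Fin n) ℝ) (Y : Matrix (Fin n) (Fin m) ℝ) : Prop :=
  X * Y * X = X ∧ Y * X * Y = Y ∧ (X * Y)ᵀ = X * Y ∧ (Y * X)ᵀ = Y * X

/-- The Moore-Penrose pseudoinverse (it always exists and is unique, so this choice-based
definition picks out exactly the Moore-Penrose pseudoinverse). -/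
def pinv {m n : ℕ} (X : Matrix (Fin m) (Fin n) ℝ) : Matrix (Fin n) (Fin m) ℝ := by
  classical exact if h : ∃ Y, IsMP X Y then h.choose else 0

/-- Orthogonal projection onto the column space of a matrix: `P_X = X X⁺`. -/
def projCol {m n : ℕ} (X : Matrix (Fin m) (Fin n) ℝ) : Matrix (Fin m) (Fin m) ℝ := X * pinv X

/-- Distance between column spaces: `d₂(U, W) = ‖P_U - P_W‖₂`. -/
def d2 {m p q : ℕ} (U : Matrix (Fin m) (Fin p) ℝ) (W : Matrix (Fin m) (Fin q) ℝ) : ℝ :=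
  spec (projCol U - projCol W)

/-- `(U, s, V)` is a thin SVD of `X`: orthonormal columns, nonincreasing nonnegative
singular values, and `X = U (diag s) Vᵀ`. -/
def IsThinSVD {m n p : ℕ} (X : Matrix (Fin m) (Fin n) ℝ) (U : Matrix (Fin m) (Fin p) ℝ)
    (s : Fin p → ℝ) (V : Matrix (Fin n) (Fin p) ℝ) : Prop :=
  Uᵀ * U = 1 ∧ Vᵀ * V = 1 ∧ Antitone s ∧ (∀ i, 0 ≤ s i) ∧ X = U * Matrix.diagonal s * Vᵀ

/-- The matrix of the first `k` columns. -/
def firstCols {m p : ℕ} (U : Matrix (Fin m) (Fin p) ℝ) (k : ℕ) (h : k ≤ p) :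
    Matrix (Fin m) (Fin k) ℝ := U.submatrix id (Fin.castLE h)

/-- The matrix of the remaining columns (columns `k+1, …, p` in 1-based indexing). -/
def tailCols {m p : ℕ} (U : Matrix (Fin m) (Fin p) ℝ) (k : ℕ) (h : k ≤ p) :
    Matrix (Fin m) (Fin (p - k)) ℝ :=
  U.submatrix id (fun j => ⟨k + j.1, by have := j.2; omega⟩)

/-- `sv s i` is the `i`-th singular value (1-indexed), `0` past the end. -/
def sv {p : ℕ} (s : Fin p → ℝ) (i : ℕ) : ℝ := by
  classical exact if h : i - 1 < p then s ⟨i - 1, h⟩ else 0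

end


section DKdev
open Matrix
open scoped Matrix.Norms.L2Operator
noncomputable section
variable {m n l : ℕ}

lemma spec_eq (M : Matrix (Fin m) (Fin n) ℝ) : spec M = ‖M‖ := rfl

/-- Euclidean norm as a function on plain vectors. -/
def en {n : ℕ} (x : Fin n → ℝ) : ℝ := ‖(WithLp.equiv 2 (Fin n → ℝ)).symm x‖

lemma en_nonneg (x : Fin n → ℝ) : 0 ≤ en x := norm_nonneg _

lemma en_sq (x : Fin n → ℝ) : en x ^ 2 = x ⬝ᵥ x := by
  rw [en, EuclideanSpace.norm_eq]
  rw [Real.sq_sqrt (by positivity)]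
  simp [dotProduct, sq]

lemma dot_abs_le (x y : Fin n → ℝ) : |x ⬝ᵥ y| ≤ en x * en y := by
  have := abs_real_inner_le_norm ((WithLp.equiv 2 (Fin n → ℝ)).symm x)
    ((WithLp.equiv 2 (Fin n → ℝ)).symm y)
  have h2 : (inner ℝ ((WithLp.equiv 2 (Fin n → ℝ)).symm x) ((WithLp.equiv 2 (Fin n → ℝ)).symm y) : ℝ)
      = x ⬝ᵥ y := by
    simp [PiLp.inner_apply, dotProduct, RCLike.inner_apply, mul_comm]
  rwa [h2] at this

lemma en_mulVec_le (M : Matrix (Fin m) (Fin n) ℝ) (x : Fin n → ℝ) :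
    en (M *ᵥ x) ≤ spec M * en x := by
  simpa [en, spec_eq] using M.l2_opNorm_mulVec ((WithLp.equiv 2 (Fin n → ℝ)).symm x)

lemma spec_le_bound {M : Matrix (Fin m) (Fin n) ℝ} {C : ℝ} (hC : 0 ≤ C)
    (h : ∀ x, en (M *ᵥ x) ≤ C * en x) : spec M ≤ C := by
  rw [spec_eq, Matrix.l2_opNorm_def]
  apply ContinuousLinearMap.opNorm_le_bound _ hC
  intro x
  simpa [en, Matrix.toEuclideanLin_apply] using h x

lemma spec_transpose (M : Matrix (Fin m) (Fin n) ℝ) : spec Mᵀ = spec M := by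
  have : Mᴴ = Mᵀ := by ext i j; simp [conjTranspose_apply]
  rw [spec_eq, spec_eq, ← this, Matrix.l2_opNorm_conjTranspose]

lemma spec_mul_le (M : Matrix (Fin m) (Fin n) ℝ) (N : Matrix (Fin n) (Fin l) ℝ) :
    spec (M * N) ≤ spec M * spec N := Matrix.l2_opNorm_mul M N

lemma spec_conjT_mul (M : Matrix (Fin m) (Fin n) ℝ) : spec (Mᵀ * M) = spec M ^ 2 := by
  have : Mᴴ = Mᵀ := by ext i j; simp [conjTranspose_apply]
  rw [spec_eq, spec_eq, ← this, Matrix.l2_opNorm_conjTranspose_mul_self, sq]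

lemma spec_neg (M : Matrix (Fin m) (Fin n) ℝ) : spec (-M) = spec M := by
  rw [spec_eq, spec_eq, norm_neg]

lemma spec_nonneg (M : Matrix (Fin m) (Fin n) ℝ) : 0 ≤ spec M := norm_nonneg _

lemma isMP_unique {m p : ℕ} {X : Matrix (Fin m) (Fin p) ℝ} {Y Z : Matrix (Fin p) (Fin m) ℝ}
    (hY : IsMP X Y) (hZ : IsMP X Z) : Y = Z := by
  obtain ⟨y1, y2, y3, y4⟩ := hY
  obtain ⟨z1, z2, z3, z4⟩ := hZ
  have hXY : X * Y = X * Z := by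
    calc X * Y = (X * Y)ᵀ := y3.symm
    _ = Yᵀ * Xᵀ := transpose_mul X Y
    _ = Yᵀ * (X * Z * X)ᵀ := by rw [z1]
    _ = Yᵀ * (Xᵀ * (X * Z)ᵀ) := by rw [transpose_mul (X * Z) X]
    _ = (Yᵀ * Xᵀ) * (X * Z)ᵀ := by rw [Matrix.mul_assoc]
    _ = (X * Y)ᵀ * (X * Z)ᵀ := by rw [transpose_mul X Y]
    _ = (X * Y) * (X * Z) := by rw [y3, z3]
    _ = (X * Y * X) * Z := by simp only [Matrix.mul_assoc]
    _ = X * Z := by rw [y1]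
  have hYX : Y * X = Z * X := by
    calc Y * X = (Y * X)ᵀ := y4.symm
    _ = Xᵀ * Yᵀ := transpose_mul Y X
    _ = (X * Z * X)ᵀ * Yᵀ := by rw [z1]
    _ = ((Z * X)ᵀ * Xᵀ) * Yᵀ := by rw [show X * Z * X = X * (Z * X) from Matrix.mul_assoc X Z X,
        transpose_mul X (Z * X)]
    _ = (Z * X)ᵀ * (Y * X)ᵀ := by rw [Matrix.mul_assoc, ← transpose_mul Y X]
    _ = (Z * X) * (Y * X) := by rw [z4, y4]
    _ = Z * (X * Y * X) := by simp only [Matrix.mul_assoc]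
    _ = Z * X := by rw [y1]
  calc Y = Y * X * Y := y2.symm
  _ = (Z * X) * Y := by rw [hYX]
  _ = Z * (X * Y) := by rw [Matrix.mul_assoc]
  _ = Z * (X * Z) := by rw [hXY]
  _ = (Z * X) * Z := by rw [Matrix.mul_assoc]
  _ = Z := z2

lemma isMP_orth {m p : ℕ} {X : Matrix (Fin m) (Fin p) ℝ} (h : Xᵀ * X = 1) : IsMP X Xᵀ := by
  refine ⟨?_, ?_, ?_, ?_⟩
  · rw [Matrix.mul_assoc, h, Matrix.mul_one]
  · rw [Matrix.mul_assoc, ← Matrix.mul_assoc, h, Matrix.one_mul]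
  · rw [transpose_mul, transpose_transpose]
  · rw [h, transpose_one]

lemma pinv_orth {m p : ℕ} {X : Matrix (Fin m) (Fin p) ℝ} (h : Xᵀ * X = 1) : pinv X = Xᵀ := by
  have hex : ∃ Y, IsMP X Y := ⟨Xᵀ, isMP_orth h⟩
  rw [pinv, dif_pos hex]
  exact isMP_unique hex.choose_spec (isMP_orth h)

lemma projCol_orth {m p : ℕ} {X : Matrix (Fin m) (Fin p) ℝ} (h : Xᵀ * X = 1) :
    projCol X = X * Xᵀ := by rw [projCol, pinv_orth h]

variable {n k : ℕ}

lemma ortho_ent {V : Matrix (Fin n) (Fin n) ℝ} (hV : Vᵀ * V = 1) (b d : Fin n) :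
    (∑ a, V a b * V a d) = if b = d then (1:ℝ) else 0 := by
  have := congrFun (congrFun hV b) d
  simpa [Matrix.mul_apply, Matrix.one_apply] using this

lemma firstCols_orth {V : Matrix (Fin n) (Fin n) ℝ} (hV : Vᵀ * V = 1) (h : k ≤ n) :
    (firstCols V k h)ᵀ * firstCols V k h = 1 := by
  ext i j
  have := ortho_ent hV (Fin.castLE h i) (Fin.castLE h j)
  simp only [Matrix.mul_apply, transpose_apply, firstCols, submatrix_apply, id_eq]
  rw [this, Matrix.one_apply]
  simp [Fin.castLE_inj]

/-- A * Vk = Vk * diag (lam ∘ castLE) -/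
lemma mul_firstCols {V A : Matrix (Fin n) (Fin n) ℝ} {lam : Fin n → ℝ}
    (hV : Vᵀ * V = 1) (hdec : A = V * Matrix.diagonal lam * Vᵀ) (h : k ≤ n) :
    A * firstCols V k h = firstCols V k h * Matrix.diagonal (lam ∘ Fin.castLE h) := by
  have hAV : A * V = V * Matrix.diagonal lam := by
    rw [hdec, Matrix.mul_assoc, hV, Matrix.mul_one]
  ext a j
  have h1 : (A * firstCols V k h) a j = (A * V) a (Fin.castLE h j) := by
    simp [Matrix.mul_apply, firstCols]
  rw [h1, hAV]
  simp [Matrix.mul_apply, Matrix.diagonal, firstCols, Finset.sum_ite_eq, Fin.castLE_inj]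

/-- the projection onto the first k columns commutes with A -/
lemma proj_comm {V A : Matrix (Fin n) (Fin n) ℝ} {lam : Fin n → ℝ}
    (hA : Aᵀ = A) (hV : Vᵀ * V = 1) (hdec : A = V * Matrix.diagonal lam * Vᵀ) (h : k ≤ n) :
    A * (firstCols V k h * (firstCols V k h)ᵀ)
      = (firstCols V k h * (firstCols V k h)ᵀ) * A := by
  set Vk := firstCols V k h
  have h1 : A * (Vk * Vkᵀ) = (Vk * Matrix.diagonal (lam ∘ Fin.castLE h)) * Vkᵀ := by
    rw [← Matrix.mul_assoc, mul_firstCols hV hdec h]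
  have hsymm : ((Vk * Matrix.diagonal (lam ∘ Fin.castLE h)) * Vkᵀ)ᵀ
      = (Vk * Matrix.diagonal (lam ∘ Fin.castLE h)) * Vkᵀ := by
    rw [transpose_mul, transpose_mul, transpose_transpose, diagonal_transpose,
      Matrix.mul_assoc]
  have h2 : (Vk * Vkᵀ) * A = (A * (Vk * Vkᵀ))ᵀ := by
    rw [transpose_mul, transpose_mul, transpose_transpose, hA, Matrix.mul_assoc]
  rw [h2, h1, hsymm]

lemma quadA {V A : Matrix (Fin n) (Fin n) ℝ} {lam : Fin n → ℝ}
    (hV : Vᵀ * V = 1) (hdec : A = V * Matrix.diagonal lam * Vᵀ) (x : Fin n → ℝ) :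
    x ⬝ᵥ (A *ᵥ x) = ∑ i, lam i * ((Vᵀ *ᵥ x) i)^2 := by
  have hAx : A *ᵥ x = V *ᵥ (Matrix.diagonal lam *ᵥ (Vᵀ *ᵥ x)) := by
    rw [hdec, ← Matrix.mulVec_mulVec, ← Matrix.mulVec_mulVec]
  rw [hAx, Matrix.dotProduct_mulVec, ← Matrix.mulVec_transpose]
  simp only [dotProduct, Matrix.mulVec_diagonal]
  exact Finset.sum_congr rfl fun i _ => by ring

lemma quadN {V : Matrix (Fin n) (Fin n) ℝ} (hV : Vᵀ * V = 1) (x : Fin n → ℝ) :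
    x ⬝ᵥ x = ∑ i, ((Vᵀ *ᵥ x) i)^2 := by
  have hVV : V * Vᵀ = 1 := mul_eq_one_comm.mp hV
  have h1 : x ⬝ᵥ x = x ⬝ᵥ ((V * Vᵀ) *ᵥ x) := by rw [hVV, Matrix.one_mulVec]
  rw [h1, ← Matrix.mulVec_mulVec, Matrix.dotProduct_mulVec, ← Matrix.mulVec_transpose]
  simp [dotProduct, sq]

/-- If `P x = x` with `P` projection onto first k columns, coordinates past k vanish -/
lemma coord_top {V : Matrix (Fin n) (Fin n) ℝ} (hV : Vᵀ * V = 1) (h : k ≤ n)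
    {x : Fin n → ℝ} (hx : (firstCols V k h * (firstCols V k h)ᵀ) *ᵥ x = x)
    (i : Fin n) (hi : k ≤ i.1) : (Vᵀ *ᵥ x) i = 0 := by
  set Vk := firstCols V k h
  have hx2 : x = Vk *ᵥ (Vkᵀ *ᵥ x) := by rw [Matrix.mulVec_mulVec, hx]
  rw [hx2, Matrix.mulVec_mulVec]
  have hrow : ∀ j, (Vᵀ * Vk) i j = 0 := by
    intro j
    have : (Vᵀ * Vk) i j = ∑ a, V a i * V a (Fin.castLE h j) := by
      simp [Matrix.mul_apply, Vk, firstCols]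
    rw [this, ortho_ent hV i (Fin.castLE h j), if_neg]
    intro hc
    have : i.1 = (j : ℕ) := congrArg Fin.val hc
    omega
  simp [Matrix.mulVec, dotProduct, hrow]

/-- If `P x = 0`, the first k coordinates vanish -/
lemma coord_bot {V : Matrix (Fin n) (Fin n) ℝ} (hV : Vᵀ * V = 1) (h : k ≤ n)
    {x : Fin n → ℝ} (hx : (firstCols V k h * (firstCols V k h)ᵀ) *ᵥ x = 0)
    (i : Fin n) (hi : i.1 < k) : (Vᵀ *ᵥ x) i = 0 := by
  set Vk := firstCols V k h
  have hk : Vkᵀ *ᵥ x = 0 := by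
    have h1 : Vkᵀ *ᵥ x = (Vkᵀ * Vk) *ᵥ (Vkᵀ *ᵥ x) := by
      rw [firstCols_orth hV h, Matrix.one_mulVec]
    have h2 : (Vkᵀ * Vk) *ᵥ (Vkᵀ *ᵥ x) = Vkᵀ *ᵥ ((Vk * Vkᵀ) *ᵥ x) := by
      rw [Matrix.mulVec_mulVec, Matrix.mulVec_mulVec, Matrix.mul_assoc]
    rw [h1, h2, hx, Matrix.mulVec_zero]
  have : (Vᵀ *ᵥ x) i = (Vkᵀ *ᵥ x) ⟨i.1, hi⟩ := by
    simp only [Matrix.mulVec, dotProduct, transpose_apply, Vk, firstCols, submatrix_apply,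
      id_eq]
    congr
  rw [this, hk]
  rfl

variable {n : ℕ}
lemma en_smul (c : ℝ) (x : Fin n → ℝ) : en (c • x) = |c| * en x := by
  rw [en, WithLp.equiv_symm_apply, WithLp.toLp_smul, norm_smul, Real.norm_eq_abs, en]
  rfl

lemma inner_eq_dot (x y : EuclideanSpace ℝ (Fin n)) :
    (inner ℝ x y : ℝ) = (WithLp.equiv 2 (Fin n → ℝ) x) ⬝ᵥ (WithLp.equiv 2 (Fin n → ℝ) y) := by
  simp [PiLp.inner_apply, dotProduct, RCLike.inner_apply, mul_comm]

lemma dot_self_nonneg (x : Fin n → ℝ) : 0 ≤ x ⬝ᵥ x :=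
  Finset.sum_nonneg fun i _ => mul_self_nonneg _

lemma exists_top_singular (hn : 0 < n) (T : Matrix (Fin n) (Fin n) ℝ) :
    ∃ u : Fin n → ℝ, u ⬝ᵥ u = 1 ∧ (Tᵀ * T) *ᵥ u = (spec T ^ 2) • u := by
  haveI : Nonempty (Fin n) := ⟨⟨0, hn⟩⟩
  set S := Tᵀ * T with hSdef
  have hST : Sᵀ = S := by rw [hSdef, transpose_mul, transpose_transpose]
  have hS : S.IsHermitian := by
    have hct : Sᴴ = Sᵀ := by ext i j; simp [conjTranspose_apply]
    rw [Matrix.IsHermitian, hct, hST]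
  set b := hS.eigenvectorBasis with hb
  set μ := hS.eigenvalues with hμdef
  set v : Fin n → Fin n → ℝ := fun i => ⇑(b i) with hv
  have hmul : ∀ i, S *ᵥ v i = μ i • v i := fun i => hS.mulVec_eigenvectorBasis i
  have hen : ∀ i, en (v i) = ‖b i‖ := fun i => rfl
  have hunit : ∀ i, v i ⬝ᵥ v i = 1 := by
    intro i
    rw [← en_sq, hen, b.orthonormal.1 i, one_pow]
  have hdotS : ∀ (x : Fin n → ℝ), x ⬝ᵥ (S *ᵥ x) = (T *ᵥ x) ⬝ᵥ (T *ᵥ x) := by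
    intro x
    rw [hSdef, ← Matrix.mulVec_mulVec, Matrix.dotProduct_mulVec, Matrix.vecMul_transpose]
  have hμnn : ∀ i, 0 ≤ μ i := by
    intro i
    have h1 : v i ⬝ᵥ (S *ᵥ v i) = μ i := by
      rw [hmul i, dotProduct_smul, hunit i]
      simp
    rw [← h1, hdotS]
    exact dot_self_nonneg _
  obtain ⟨i₀, hmax⟩ := Finite.exists_max μ
  -- Parseval
  have parseval : ∀ x : Fin n → ℝ, (∑ i, (v i ⬝ᵥ x) ^ 2) = x ⬝ᵥ x := by
    intro x
    set x' : EuclideanSpace ℝ (Fin n) := (WithLp.equiv 2 (Fin n → ℝ)).symm x with hx'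
    have hrepr : ∀ i, b.repr x' i = v i ⬝ᵥ x := by
      intro i
      rw [b.repr_apply_apply, inner_eq_dot]
      rfl
    have h1 : en (WithLp.equiv 2 (Fin n → ℝ) (b.repr x')) = ‖b.repr x'‖ := rfl
    have h2 : ‖b.repr x'‖ = ‖x'‖ := b.repr.norm_map x'
    calc ∑ i, (v i ⬝ᵥ x) ^ 2
        = ∑ i, ((WithLp.equiv 2 (Fin n → ℝ)) (b.repr x') i) ^ 2 :=
          Finset.sum_congr rfl fun i _ => by rw [← hrepr i]; rfl
      _ = (WithLp.equiv 2 (Fin n → ℝ) (b.repr x')) ⬝ᵥ (WithLp.equiv 2 (Fin n → ℝ) (b.repr x')) := by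
          simp [dotProduct, sq]
      _ = en ((WithLp.equiv 2 (Fin n → ℝ)) (b.repr x')) ^ 2 := (en_sq _).symm
      _ = ‖b.repr x'‖ ^ 2 := by rw [h1]
      _ = ‖x'‖ ^ 2 := by rw [h2]
      _ = en x ^ 2 := rfl
      _ = x ⬝ᵥ x := en_sq x
  have hexp : ∀ (x : Fin n → ℝ) i, v i ⬝ᵥ (S *ᵥ x) = μ i * (v i ⬝ᵥ x) := by
    intro x i
    rw [Matrix.dotProduct_mulVec, ← Matrix.mulVec_transpose, hST, hmul i,
      smul_dotProduct]
    rfl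
  have hub : ∀ x : Fin n → ℝ, en (S *ᵥ x) ≤ μ i₀ * en x := by
    intro x
    have hs : en (S *ᵥ x) ^ 2 ≤ (μ i₀ * en x) ^ 2 := by
      rw [en_sq, ← parseval (S *ᵥ x)]
      have : ∀ i ∈ Finset.univ, (v i ⬝ᵥ (S *ᵥ x)) ^ 2 ≤ μ i₀ ^ 2 * (v i ⬝ᵥ x) ^ 2 := by
        intro i _
        rw [hexp x i, mul_pow]
        have : μ i ^ 2 ≤ μ i₀ ^ 2 := pow_le_pow_left₀ (hμnn i) (hmax i) 2
        nlinarith [sq_nonneg (v i ⬝ᵥ x)]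
      calc ∑ i, (v i ⬝ᵥ (S *ᵥ x)) ^ 2 ≤ ∑ i, μ i₀ ^ 2 * (v i ⬝ᵥ x) ^ 2 :=
            Finset.sum_le_sum this
      _ = μ i₀ ^ 2 * ∑ i, (v i ⬝ᵥ x) ^ 2 := by rw [Finset.mul_sum]
      _ = μ i₀ ^ 2 * (x ⬝ᵥ x) := by rw [parseval x]
      _ = (μ i₀ * en x) ^ 2 := by rw [mul_pow, en_sq]
    have h1 := Real.sqrt_le_sqrt hs
    rwa [Real.sqrt_sq (en_nonneg _), Real.sqrt_sq (mul_nonneg (hμnn i₀) (en_nonneg x))] at h1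
  have hspecS : spec S = μ i₀ := by
    apply le_antisymm
    · exact spec_le_bound (hμnn i₀) hub
    · have h1 : en (S *ᵥ v i₀) = μ i₀ := by
        rw [hmul i₀, en_smul, abs_of_nonneg (hμnn i₀), hen, b.orthonormal.1 i₀, mul_one]
      have h2 := en_mulVec_le S (v i₀)
      rw [h1, hen, b.orthonormal.1 i₀, mul_one] at h2
      exact h2
  refine ⟨v i₀, hunit i₀, ?_⟩
  rw [hmul i₀, ← spec_conjT_mul, ← hSdef, hspecS]

lemma proj_idem {p : ℕ} {X : Matrix (Fin n) (Fin p) ℝ} (h : Xᵀ * X = 1) :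
    (X * Xᵀ) * (X * Xᵀ) = X * Xᵀ := by
  rw [Matrix.mul_assoc, ← Matrix.mul_assoc Xᵀ X Xᵀ, h, Matrix.one_mul]

lemma proj_symm {p : ℕ} (X : Matrix (Fin n) (Fin p) ℝ) : (X * Xᵀ)ᵀ = X * Xᵀ := by
  rw [transpose_mul, transpose_transpose]

lemma quad_lb {k : ℕ} (hk0 : 0 < k) (hkn : k < n)
    {A VA : Matrix (Fin n) (Fin n) ℝ} {lamA : Fin n → ℝ}
    (hVA : VAᵀ * VA = 1) (hlamA : Antitone lamA)
    (hdecA : A = VA * Matrix.diagonal lamA * VAᵀ)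
    (u : Fin n → ℝ) (huu : u ⬝ᵥ u = 1)
    (hPu : (firstCols VA k hkn.le * (firstCols VA k hkn.le)ᵀ) *ᵥ u = u) :
    lamA ⟨k - 1, by omega⟩ ≤ u ⬝ᵥ (A *ᵥ u) := by
  rw [quadA hVA hdecA u]
  have hN : (1:ℝ) = ∑ i, ((VAᵀ *ᵥ u) i)^2 := by rw [← quadN hVA u, huu]
  calc lamA ⟨k - 1, by omega⟩ = ∑ i, lamA ⟨k - 1, by omega⟩ * ((VAᵀ *ᵥ u) i)^2 := by
        rw [← Finset.mul_sum, ← hN, mul_one]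
  _ ≤ ∑ i, lamA i * ((VAᵀ *ᵥ u) i)^2 := by
      apply Finset.sum_le_sum
      intro i _
      by_cases hi : i.1 < k
      · have hle : i ≤ (⟨k - 1, by omega⟩ : Fin n) := by
          simp only [Fin.le_def, Fin.val_mk]
          omega
        exact mul_le_mul_of_nonneg_right (hlamA hle) (sq_nonneg _)
      · rw [coord_top hVA hkn.le hPu i (le_of_not_gt hi)]
        simp

lemma quad_ub {k : ℕ} (hkn : k < n)
    {At VAt : Matrix (Fin n) (Fin n) ℝ} {lamAt : Fin n → ℝ}
    (hVAt : VAtᵀ * VAt = 1) (hlamAt : Antitone lamAt)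
    (hdecAt : At = VAt * Matrix.diagonal lamAt * VAtᵀ)
    (w : Fin n → ℝ) (hww : w ⬝ᵥ w = 1)
    (hPw : (firstCols VAt k hkn.le * (firstCols VAt k hkn.le)ᵀ) *ᵥ w = 0) :
    w ⬝ᵥ (At *ᵥ w) ≤ lamAt ⟨k, hkn⟩ := by
  rw [quadA hVAt hdecAt w]
  have hN : (1:ℝ) = ∑ i, ((VAtᵀ *ᵥ w) i)^2 := by rw [← quadN hVAt w, hww]
  calc ∑ i, lamAt i * ((VAtᵀ *ᵥ w) i)^2 ≤ ∑ i, lamAt ⟨k, hkn⟩ * ((VAtᵀ *ᵥ w) i)^2 := by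
        apply Finset.sum_le_sum
        intro i _
        by_cases hi : i.1 < k
        · rw [coord_bot hVAt hkn.le hPw i hi]
          simp
        · have hle : (⟨k, hkn⟩ : Fin n) ≤ i := by
            simp only [Fin.le_def, Fin.val_mk]
            omega
          exact mul_le_mul_of_nonneg_right (hlamAt hle) (sq_nonneg _)
  _ = lamAt ⟨k, hkn⟩ := by rw [← Finset.mul_sum, ← hN, mul_one]

lemma dk_core {k : ℕ} (hk0 : 0 < k) (hkn : k < n)
    (A At VA VAt : Matrix (Fin n) (Fin n) ℝ) (lamA lamAt : Fin n → ℝ)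
    (hA : Aᵀ = A) (hAt : Atᵀ = At)
    (hVA : VAᵀ * VA = 1) (hVAt : VAtᵀ * VAt = 1)
    (hlamA : Antitone lamA) (hlamAt : Antitone lamAt)
    (hdecA : A = VA * Matrix.diagonal lamA * VAᵀ)
    (hdecAt : At = VAt * Matrix.diagonal lamAt * VAtᵀ)
    (hγ : 0 < lamA ⟨k - 1, by omega⟩ - lamAt ⟨k, hkn⟩) :
    spec ((1 - firstCols VAt k hkn.le * (firstCols VAt k hkn.le)ᵀ)
        * (firstCols VA k hkn.le * (firstCols VA k hkn.le)ᵀ))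
      ≤ spec (A - At) / (lamA ⟨k - 1, by omega⟩ - lamAt ⟨k, hkn⟩) := by
  set P : Matrix (Fin n) (Fin n) ℝ := firstCols VA k hkn.le * (firstCols VA k hkn.le)ᵀ with hPdef
  set Pt : Matrix (Fin n) (Fin n) ℝ :=
    firstCols VAt k hkn.le * (firstCols VAt k hkn.le)ᵀ with hPtdef
  set Q : Matrix (Fin n) (Fin n) ℝ := 1 - Pt with hQdef
  set T : Matrix (Fin n) (Fin n) ℝ := Q * P with hTdef
  set σ : ℝ := spec T with hσdef
  set ε : ℝ := spec (A - At) with hεdef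
  set γ : ℝ := lamA ⟨k - 1, by omega⟩ - lamAt ⟨k, hkn⟩ with hγdef
  have hεnn : 0 ≤ ε := spec_nonneg _
  rcases eq_or_lt_of_le (spec_nonneg T) with h0 | hσpos
  · rw [hσdef, ← h0]
    exact div_nonneg hεnn hγ.le
  have hσne : σ ≠ 0 := ne_of_gt hσpos
  have hP2 : P * P = P := proj_idem (firstCols_orth hVA hkn.le)
  have hPt2 : Pt * Pt = Pt := proj_idem (firstCols_orth hVAt hkn.le)
  have hPs : Pᵀ = P := proj_symm _
  have hPts : Ptᵀ = Pt := proj_symm _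
  have hQs : Qᵀ = Q := by rw [hQdef, transpose_sub, transpose_one, hPts]
  have hTt : Tᵀ = P * Q := by rw [hTdef, transpose_mul, hPs, hQs]
  obtain ⟨u, huu, hSu⟩ := exists_top_singular (lt_of_le_of_lt (Nat.zero_le k) hkn) T
  rw [← hσdef] at hSu
  have hσ2 : (T *ᵥ u) ⬝ᵥ (T *ᵥ u) = σ ^ 2 := by
    rw [Matrix.dotProduct_mulVec, ← Matrix.mulVec_transpose, Matrix.mulVec_mulVec, hSu,
      smul_dotProduct, huu, smul_eq_mul, mul_one]
  set w : Fin n → ℝ := σ⁻¹ • (T *ᵥ u) with hwdef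
  have hTu : T *ᵥ u = σ • w := by
    rw [hwdef, smul_smul, mul_inv_cancel₀ hσne, one_smul]
  have hww : w ⬝ᵥ w = 1 := by
    rw [hwdef, smul_dotProduct, dotProduct_smul, hσ2, smul_eq_mul, smul_eq_mul, sq]
    field_simp
  have hTtw : Tᵀ *ᵥ w = σ • u := by
    rw [hwdef, Matrix.mulVec_smul, Matrix.mulVec_mulVec, hSu, smul_smul]
    rw [show σ⁻¹ * σ ^ 2 = σ by field_simp]
  have hPu : P *ᵥ u = u := by
    have h1 : P * (Tᵀ * T) = Tᵀ * T := by
      rw [hTt, ← Matrix.mul_assoc P (P * Q) T, ← Matrix.mul_assoc P P Q, hP2]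
    have h2 : u = (σ ^ 2)⁻¹ • ((Tᵀ * T) *ᵥ u) := by
      rw [hSu, smul_smul, inv_mul_cancel₀ (pow_ne_zero _ hσne), one_smul]
    conv_lhs => rw [h2]
    rw [Matrix.mulVec_smul, Matrix.mulVec_mulVec, h1, ← h2]
  have hPtw : Pt *ᵥ w = 0 := by
    have h2 : Pt * T = 0 := by
      rw [hTdef, hQdef, ← Matrix.mul_assoc, Matrix.mul_sub, Matrix.mul_one, hPt2, sub_self,
        Matrix.zero_mul]
    rw [hwdef, Matrix.mulVec_smul, Matrix.mulVec_mulVec, h2, Matrix.zero_mulVec, smul_zero]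
  have hcommA : A * P = P * A := proj_comm hA hVA hdecA hkn.le
  have hcommAt : At * Pt = Pt * At := proj_comm hAt hVAt hdecAt hkn.le
  have hAQ : At * Q = Q * At := by
    rw [hQdef, Matrix.mul_sub, Matrix.sub_mul, Matrix.mul_one, Matrix.one_mul, hcommAt]
  have hSyl : At * T - T * A = Q * (At - A) * P := by
    have e1 : At * T = (Q * At) * P := by
      rw [hTdef, ← Matrix.mul_assoc, hAQ]
    have e2 : T * A = (Q * A) * P := by
      rw [hTdef, Matrix.mul_assoc, ← hcommA, ← Matrix.mul_assoc]
    rw [e1, e2, ← Matrix.sub_mul, ← Matrix.mul_sub]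
  have scalar1 : w ⬝ᵥ ((At * T - T * A) *ᵥ u)
      = σ * (w ⬝ᵥ (At *ᵥ w)) - σ * (u ⬝ᵥ (A *ᵥ u)) := by
    rw [Matrix.sub_mulVec, dotProduct_sub]
    congr 1
    · rw [← Matrix.mulVec_mulVec, hTu, Matrix.mulVec_smul, dotProduct_smul, smul_eq_mul]
    · rw [← Matrix.mulVec_mulVec, Matrix.dotProduct_mulVec, ← Matrix.mulVec_transpose, hTtw,
        smul_dotProduct, smul_eq_mul]
  have scalar2 : w ⬝ᵥ ((Q * (At - A) * P) *ᵥ u) = w ⬝ᵥ ((At - A) *ᵥ u) := by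
    rw [← Matrix.mulVec_mulVec, ← Matrix.mulVec_mulVec, hPu, Matrix.dotProduct_mulVec,
      ← Matrix.mulVec_transpose, hQs]
    have : Q *ᵥ w = w := by
      rw [hQdef, Matrix.sub_mulVec, Matrix.one_mulVec, hPtw, sub_zero]
    rw [this]
  have hbound : |w ⬝ᵥ ((At - A) *ᵥ u)| ≤ ε := by
    have henu : en u = 1 := by
      have h1 := en_sq u
      rw [huu] at h1
      nlinarith [en_nonneg u]
    have henw : en w = 1 := by
      have h1 := en_sq w
      rw [hww] at h1
      nlinarith [en_nonneg w]
    have h2 : spec (At - A) = ε := by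
      rw [hεdef, show At - A = -(A - At) from (neg_sub A At).symm, spec_neg]
    calc |w ⬝ᵥ ((At - A) *ᵥ u)| ≤ en w * en ((At - A) *ᵥ u) := dot_abs_le _ _
    _ ≤ en w * (spec (At - A) * en u) :=
        mul_le_mul_of_nonneg_left (en_mulVec_le _ _) (en_nonneg _)
    _ = ε := by rw [henw, henu, h2, one_mul, mul_one]
  have hqa := quad_lb hk0 hkn hVA hlamA hdecA u huu hPu
  have hqb := quad_ub hkn hVAt hlamAt hdecAt w hww hPtw
  have key : σ * γ ≤ ε := by
    have h3 : σ * (u ⬝ᵥ (A *ᵥ u)) - σ * (w ⬝ᵥ (At *ᵥ w)) = -(w ⬝ᵥ ((At - A) *ᵥ u)) := by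
      rw [← scalar2, ← hSyl, scalar1]
      ring
    have h4 : σ * γ ≤ σ * ((u ⬝ᵥ (A *ᵥ u)) - (w ⬝ᵥ (At *ᵥ w))) :=
      mul_le_mul_of_nonneg_left (hγdef ▸ sub_le_sub hqa hqb) hσpos.le
    calc σ * γ ≤ σ * ((u ⬝ᵥ (A *ᵥ u)) - (w ⬝ᵥ (At *ᵥ w))) := h4
    _ = σ * (u ⬝ᵥ (A *ᵥ u)) - σ * (w ⬝ᵥ (At *ᵥ w)) := mul_sub _ _ _
    _ = -(w ⬝ᵥ ((At - A) *ᵥ u)) := h3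
    _ ≤ |w ⬝ᵥ ((At - A) *ᵥ u)| := neg_le_abs _
    _ ≤ ε := hbound
  rw [le_div_iff₀ hγ]
  exact key

lemma cols_li {V : Matrix (Fin n) (Fin n) ℝ} (hV : Vᵀ * V = 1) {ι : Type} [Fintype ι]
    (g : ι → Fin n) (hg : Function.Injective g) :
    LinearIndependent ℝ (fun i => (fun a => V a (g i) : Fin n → ℝ)) := by
  classical
  rw [Fintype.linearIndependent_iff]
  intro c hc i₀
  have hap : ∀ a, (∑ i, c i * V a (g i)) = 0 := by
    intro a
    have := congrFun hc a
    simpa [Finset.sum_apply, Pi.smul_apply, smul_eq_mul] using this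
  have e2 : (∑ i, c i * (if i₀ = i then (1:ℝ) else 0)) = c i₀ := by
    simp [mul_ite]
  have e3 : (∑ i, c i * (∑ a, V a (g i₀) * V a (g i))) = c i₀ := by
    rw [← e2]
    refine Finset.sum_congr rfl fun i _ => ?_
    rw [ortho_ent hV]
    by_cases h : i₀ = i
    · simp [h]
    · rw [if_neg (fun hgg => h (hg hgg)), if_neg h]
  have e4 : (∑ i, c i * (∑ a, V a (g i₀) * V a (g i))) = 0 := by
    calc (∑ i, c i * ∑ a, V a (g i₀) * V a (g i))
        = ∑ i, ∑ a, V a (g i₀) * (c i * V a (g i)) := by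
          refine Finset.sum_congr rfl fun i _ => ?_
          rw [Finset.mul_sum]
          exact Finset.sum_congr rfl fun a _ => by ring
      _ = ∑ a, ∑ i, V a (g i₀) * (c i * V a (g i)) := Finset.sum_comm
      _ = ∑ a, V a (g i₀) * (∑ i, c i * V a (g i)) := by
          exact Finset.sum_congr rfl fun a _ => (Finset.mul_sum _ _ _).symm
      _ = 0 := by simp [hap]
  exact e3.symm.trans e4

lemma coord_span {V : Matrix (Fin n) (Fin n) ℝ} (hV : Vᵀ * V = 1) {ι : Type} [Fintype ι]
    (g : ι → Fin n) (c : ι → ℝ) (a : Fin n) (ha : ∀ i, g i ≠ a) :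
    (Vᵀ *ᵥ (∑ i, c i • (fun b => V b (g i) : Fin n → ℝ))) a = 0 := by
  have hxb : ∀ b, (∑ i, c i • (fun b' => V b' (g i) : Fin n → ℝ)) b = ∑ i, c i * V b (g i) := by
    intro b
    simp [Finset.sum_apply]
  simp only [Matrix.mulVec, dotProduct, transpose_apply]
  calc (∑ b, V b a * (∑ i, c i • (fun b' => V b' (g i) : Fin n → ℝ)) b)
      = ∑ b, ∑ i, c i * (V b a * V b (g i)) := by
        refine Finset.sum_congr rfl fun b _ => ?_
        rw [hxb b, Finset.mul_sum]
        exact Finset.sum_congr rfl fun i _ => by ring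
    _ = ∑ i, ∑ b, c i * (V b a * V b (g i)) := Finset.sum_comm
    _ = ∑ i, c i * (∑ b, V b a * V b (g i)) := by
        exact Finset.sum_congr rfl fun i _ => (Finset.mul_sum _ _ _).symm
    _ = 0 := by
        refine Finset.sum_eq_zero fun i _ => ?_
        rw [ortho_ent hV, if_neg (fun h => ha i h.symm), mul_zero]

lemma weyl (j : Fin n)
    (A At VA VAt : Matrix (Fin n) (Fin n) ℝ) (lamA lamAt : Fin n → ℝ)
    (hVA : VAᵀ * VA = 1) (hVAt : VAtᵀ * VAt = 1)
    (hlamA : Antitone lamA) (hlamAt : Antitone lamAt)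
    (hdecA : A = VA * Matrix.diagonal lamA * VAᵀ)
    (hdecAt : At = VAt * Matrix.diagonal lamAt * VAtᵀ) :
    lamAt j ≤ lamA j + spec (At - A) := by
  have hj1 : j.1 + 1 ≤ n := j.2
  set g₁ : Fin (j.1+1) → Fin n := Fin.castLE hj1 with hg₁
  set g₂ : Fin (n - j.1) → Fin n := fun i => ⟨j.1 + i.1, by omega⟩ with hg₂
  set f₁ : Fin (j.1+1) → (Fin n → ℝ) := fun i a => VAt a (g₁ i) with hf₁
  set f₂ : Fin (n - j.1) → (Fin n → ℝ) := fun i a => VA a (g₂ i) with hf₂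
  have hg₁i : Function.Injective g₁ := Fin.castLE_injective hj1
  have hg₂i : Function.Injective g₂ := by
    intro a b hab
    have : j.1 + a.1 = j.1 + b.1 := congrArg Fin.val hab
    exact Fin.ext (by omega)
  have li1 : LinearIndependent ℝ f₁ := cols_li hVAt g₁ hg₁i
  have li2 : LinearIndependent ℝ f₂ := cols_li hVA g₂ hg₂i
  set S₁ := Submodule.span ℝ (Set.range f₁) with hS₁
  set S₂ := Submodule.span ℝ (Set.range f₂) with hS₂
  have d1 : Module.finrank ℝ S₁ = j.1 + 1 := by
    rw [hS₁, finrank_span_eq_card li1, Fintype.card_fin]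
  have d2 : Module.finrank ℝ S₂ = n - j.1 := by
    rw [hS₂, finrank_span_eq_card li2, Fintype.card_fin]
  have hsup : Module.finrank ℝ ↥(S₁ ⊔ S₂) ≤ n := by
    refine le_trans (Submodule.finrank_le _) ?_
    rw [Module.finrank_pi, Fintype.card_fin]
  have hinf : S₁ ⊓ S₂ ≠ ⊥ := by
    intro hbot
    have hh := Submodule.finrank_sup_add_finrank_inf_eq S₁ S₂
    rw [hbot, finrank_bot, d1, d2] at hh
    have hjn : j.1 < n := j.2
    omega
  obtain ⟨x, hx, hx0⟩ := (Submodule.ne_bot_iff _).mp hinf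
  obtain ⟨hx1, hx2⟩ := Submodule.mem_inf.mp hx
  obtain ⟨c₁, hc₁⟩ := (Submodule.mem_span_range_iff_exists_fun ℝ).mp hx1
  obtain ⟨c₂, hc₂⟩ := (Submodule.mem_span_range_iff_exists_fun ℝ).mp hx2
  have hcoord1 : ∀ a : Fin n, j.1 < a.1 → (VAtᵀ *ᵥ x) a = 0 := by
    intro a haj
    rw [← hc₁]
    exact coord_span hVAt g₁ c₁ a (fun i hi => by
      have : (g₁ i).1 = a.1 := congrArg Fin.val hi
      have : (i : ℕ) = a.1 := this
      omega)
  have hcoord2 : ∀ a : Fin n, a.1 < j.1 → (VAᵀ *ᵥ x) a = 0 := by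
    intro a haj
    rw [← hc₂]
    exact coord_span hVA g₂ c₂ a (fun i hi => by
      have : (g₂ i).1 = a.1 := congrArg Fin.val hi
      have : j.1 + i.1 = a.1 := this
      omega)
  have hs : 0 < x ⬝ᵥ x := by
    rcases lt_or_eq_of_le (dot_self_nonneg x) with h | h
    · exact h
    · exact absurd (dotProduct_self_eq_zero.mp h.symm) hx0
  have hAt : lamAt j * (x ⬝ᵥ x) ≤ x ⬝ᵥ (At *ᵥ x) := by
    rw [quadA hVAt hdecAt x, quadN hVAt x, Finset.mul_sum]
    apply Finset.sum_le_sum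
    intro a _
    by_cases haj : j.1 < a.1
    · rw [hcoord1 a haj]
      simp
    · have hle : a ≤ j := by
        simp only [Fin.le_def]
        omega
      exact mul_le_mul_of_nonneg_right (hlamAt hle) (sq_nonneg _)
  have hA : x ⬝ᵥ (A *ᵥ x) ≤ lamA j * (x ⬝ᵥ x) := by
    rw [quadA hVA hdecA x, quadN hVA x, Finset.mul_sum]
    apply Finset.sum_le_sum
    intro a _
    by_cases haj : a.1 < j.1
    · rw [hcoord2 a haj]
      simp
    · have hle : j ≤ a := by
        simp only [Fin.le_def]
        omega
      exact mul_le_mul_of_nonneg_right (hlamA hle) (sq_nonneg _)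
  have hE : x ⬝ᵥ ((At - A) *ᵥ x) ≤ spec (At - A) * (x ⬝ᵥ x) := by
    calc x ⬝ᵥ ((At - A) *ᵥ x) ≤ |x ⬝ᵥ ((At - A) *ᵥ x)| := le_abs_self _
    _ ≤ en x * en ((At - A) *ᵥ x) := dot_abs_le _ _
    _ ≤ en x * (spec (At - A) * en x) :=
        mul_le_mul_of_nonneg_left (en_mulVec_le _ _) (en_nonneg _)
    _ = spec (At - A) * (x ⬝ᵥ x) := by rw [← en_sq]; ring
  have hsplit : x ⬝ᵥ ((At - A) *ᵥ x) = x ⬝ᵥ (At *ᵥ x) - x ⬝ᵥ (A *ᵥ x) := by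
    rw [Matrix.sub_mulVec, dotProduct_sub]
  have : lamAt j * (x ⬝ᵥ x) ≤ (lamA j + spec (At - A)) * (x ⬝ᵥ x) := by nlinarith
  exact le_of_mul_le_mul_right (by linarith) hs

lemma proj_diff_le {P Q : Matrix (Fin n) (Fin n) ℝ}
    (hPs : Pᵀ = P) (hP2 : P * P = P) (hQs : Qᵀ = Q) (hQ2 : Q * Q = Q) :
    spec (P - Q) ≤ max (spec ((1 - Q) * P)) (spec ((1 - P) * Q)) := by
  set M₁ : Matrix (Fin n) (Fin n) ℝ := P * (1 - Q) with hM₁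
  set M₂ : Matrix (Fin n) (Fin n) ℝ := (1 - P) * Q with hM₂
  set C : ℝ := max (spec ((1 - Q) * P)) (spec ((1 - P) * Q)) with hC
  have hC0 : 0 ≤ C := le_trans (spec_nonneg _) (le_max_left _ _)
  have hs1 : spec M₁ ≤ C := by
    have : M₁ᵀ = (1 - Q) * P := by
      rw [hM₁, transpose_mul, transpose_sub, transpose_one, hPs, hQs]
    rw [← spec_transpose M₁, this]
    exact le_max_left _ _
  have hs2 : spec M₂ ≤ C := le_max_right _ _
  apply spec_le_bound hC0
  intro x
  have hMdiff : P - Q = M₁ - M₂ := by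
    rw [hM₁, hM₂, Matrix.mul_sub, Matrix.sub_mul, Matrix.mul_one, Matrix.one_mul]
    abel
  have h0 : P * (1 - P) = 0 := by
    rw [Matrix.mul_sub, Matrix.mul_one, hP2, sub_self]
  have horthM : M₁ᵀ * M₂ = 0 := by
    have hM₁t : M₁ᵀ = (1 - Q) * P := by
      rw [hM₁, transpose_mul, transpose_sub, transpose_one, hPs, hQs]
    calc M₁ᵀ * M₂ = (1 - Q) * (P * ((1 - P) * Q)) := by
          rw [hM₁t, hM₂, Matrix.mul_assoc]
    _ = (1 - Q) * ((P * (1 - P)) * Q) := by rw [Matrix.mul_assoc]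
    _ = 0 := by rw [h0, Matrix.zero_mul, Matrix.mul_zero]
  have horth : (M₁ *ᵥ x) ⬝ᵥ (M₂ *ᵥ x) = 0 := by
    have h1 : x ⬝ᵥ ((M₁ᵀ * M₂) *ᵥ x) = (M₁ *ᵥ x) ⬝ᵥ (M₂ *ᵥ x) := by
      rw [← Matrix.mulVec_mulVec, Matrix.dotProduct_mulVec x, Matrix.vecMul_transpose]
    rw [← h1, horthM, Matrix.zero_mulVec, dotProduct_zero]
  have hQQ : (1 - Q) * (1 - Q) = 1 - Q := by
    have hexp : (1 - Q) * (1 - Q) = 1 - Q - Q + Q * Q := by noncomm_ring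
    rw [hexp, hQ2]
    abel
  have hM₁x : M₁ *ᵥ x = M₁ *ᵥ ((1 - Q) *ᵥ x) := by
    rw [Matrix.mulVec_mulVec, hM₁, Matrix.mul_assoc, hQQ]
  have hM₂x : M₂ *ᵥ x = M₂ *ᵥ (Q *ᵥ x) := by
    rw [Matrix.mulVec_mulVec, hM₂, Matrix.mul_assoc, hQ2]
  have hqq : (Q *ᵥ x) ⬝ᵥ (Q *ᵥ x) = x ⬝ᵥ (Q *ᵥ x) := by
    have h1 : x ⬝ᵥ ((Qᵀ * Q) *ᵥ x) = (Q *ᵥ x) ⬝ᵥ (Q *ᵥ x) := by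
      rw [← Matrix.mulVec_mulVec, Matrix.dotProduct_mulVec x, Matrix.vecMul_transpose]
    rw [← h1, hQs, hQ2]
  have hperp : en ((1 - Q) *ᵥ x) ^ 2 + en (Q *ᵥ x) ^ 2 = en x ^ 2 := by
    rw [en_sq, en_sq, en_sq]
    have hsub : (1 - Q) *ᵥ x = x - Q *ᵥ x := by
      rw [Matrix.sub_mulVec, Matrix.one_mulVec]
    rw [hsub]
    have hcomm : (Q *ᵥ x) ⬝ᵥ x = x ⬝ᵥ (Q *ᵥ x) := dotProduct_comm _ _
    simp only [sub_dotProduct, dotProduct_sub]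
    linarith [hqq, hcomm]
  have key : en ((P - Q) *ᵥ x) ^ 2 ≤ (C * en x) ^ 2 := by
    have hPQx : (P - Q) *ᵥ x = M₁ *ᵥ x - M₂ *ᵥ x := by
      rw [hMdiff, Matrix.sub_mulVec]
    have hexpand : en ((P - Q) *ᵥ x) ^ 2
        = (M₁ *ᵥ x) ⬝ᵥ (M₁ *ᵥ x) + (M₂ *ᵥ x) ⬝ᵥ (M₂ *ᵥ x) := by
      rw [hPQx, en_sq]
      have hcomm : (M₂ *ᵥ x) ⬝ᵥ (M₁ *ᵥ x) = (M₁ *ᵥ x) ⬝ᵥ (M₂ *ᵥ x) :=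
        dotProduct_comm _ _
      simp only [sub_dotProduct, dotProduct_sub]
      linarith [horth, hcomm]
    have hb1 : (M₁ *ᵥ x) ⬝ᵥ (M₁ *ᵥ x) ≤ C ^ 2 * en ((1 - Q) *ᵥ x) ^ 2 := by
      rw [← en_sq, hM₁x]
      have h1 : en (M₁ *ᵥ ((1 - Q) *ᵥ x)) ≤ C * en ((1 - Q) *ᵥ x) :=
        le_trans (en_mulVec_le _ _) (mul_le_mul_of_nonneg_right hs1 (en_nonneg _))
      calc en (M₁ *ᵥ ((1 - Q) *ᵥ x)) ^ 2 ≤ (C * en ((1 - Q) *ᵥ x)) ^ 2 :=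
            pow_le_pow_left₀ (en_nonneg _) h1 2
      _ = C ^ 2 * en ((1 - Q) *ᵥ x) ^ 2 := by ring
    have hb2 : (M₂ *ᵥ x) ⬝ᵥ (M₂ *ᵥ x) ≤ C ^ 2 * en (Q *ᵥ x) ^ 2 := by
      rw [← en_sq, hM₂x]
      have h1 : en (M₂ *ᵥ (Q *ᵥ x)) ≤ C * en (Q *ᵥ x) :=
        le_trans (en_mulVec_le _ _) (mul_le_mul_of_nonneg_right hs2 (en_nonneg _))
      calc en (M₂ *ᵥ (Q *ᵥ x)) ^ 2 ≤ (C * en (Q *ᵥ x)) ^ 2 :=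
            pow_le_pow_left₀ (en_nonneg _) h1 2
      _ = C ^ 2 * en (Q *ᵥ x) ^ 2 := by ring
    calc en ((P - Q) *ᵥ x) ^ 2
        = (M₁ *ᵥ x) ⬝ᵥ (M₁ *ᵥ x) + (M₂ *ᵥ x) ⬝ᵥ (M₂ *ᵥ x) := hexpand
    _ ≤ C ^ 2 * (en ((1 - Q) *ᵥ x) ^ 2 + en (Q *ᵥ x) ^ 2) := by linarith [hb1, hb2]
    _ = (C * en x) ^ 2 := by rw [hperp]; ring
  have h1 := Real.sqrt_le_sqrt key
  rwa [Real.sqrt_sq (en_nonneg _), Real.sqrt_sq (mul_nonneg hC0 (en_nonneg _))] at h1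

end
end DKdev

section Main
open Matrix
open scoped Matrix.Norms.L2Operator
/-- Davis–Kahan with Weyl's inequality.
If `A, Ã` are symmetric `n×n` matrices of rank at least `k` and
`‖A − Ã‖₂ < λ_k(A) − λ_{k+1}(A)`, then
`d₂(V_{A,k}, V_{Ã,k}) ≤ ‖A − Ã‖₂ / (λ_k − λ_{k+1} − ‖A − Ã‖₂)`. -/
theorem statement1
    (n k : ℕ) (hk0 : 0 < k) (hkn : k < n)
    (A At : Matrix (Fin n) (Fin n) ℝ)
    (hA : Aᵀ = A) (hAt : Atᵀ = At)
    (hrankA : k ≤ A.rank) (hrankAt : k ≤ At.rank)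
    (VA VAt : Matrix (Fin n) (Fin n) ℝ) (lamA lamAt : Fin n → ℝ)
    (hVA : VAᵀ * VA = 1) (hVAt : VAtᵀ * VAt = 1)
    (hlamA : Antitone lamA) (hlamAt : Antitone lamAt)
    (hdecA : A = VA * Matrix.diagonal lamA * VAᵀ)
    (hdecAt : At = VAt * Matrix.diagonal lamAt * VAtᵀ)
    (hpert : spec (A - At) < lamA ⟨k - 1, by omega⟩ - lamA ⟨k, hkn⟩) :
    d2 (firstCols VA k hkn.le) (firstCols VAt k hkn.le)
      ≤ spec (A - At) / (lamA ⟨k - 1, by omega⟩ - lamA ⟨k, hkn⟩ - spec (A - At)) := by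
  have hεnn : 0 ≤ spec (A - At) := spec_nonneg _
  have hδε : 0 < lamA ⟨k - 1, by omega⟩ - lamA ⟨k, hkn⟩ - spec (A - At) := by linarith
  have hEeq : spec (At - A) = spec (A - At) := by
    rw [show At - A = -(A - At) from (neg_sub A At).symm, spec_neg]
  -- Weyl both directions
  have hw1 : lamAt ⟨k, hkn⟩ ≤ lamA ⟨k, hkn⟩ + spec (A - At) := by
    have := weyl ⟨k, hkn⟩ A At VA VAt lamA lamAt hVA hVAt hlamA hlamAt hdecA hdecAt
    rwa [hEeq] at this
  have hw2 : lamA ⟨k - 1, by omega⟩ ≤ lamAt ⟨k - 1, by omega⟩ + spec (A - At) :=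
    weyl ⟨k - 1, by omega⟩ At A VAt VA lamAt lamA hVAt hVA hlamAt hlamA hdecAt hdecA
  have hγ1 : 0 < lamA ⟨k - 1, by omega⟩ - lamAt ⟨k, hkn⟩ := by linarith
  have hγ2 : 0 < lamAt ⟨k - 1, by omega⟩ - lamA ⟨k, hkn⟩ := by linarith
  have hd1 := dk_core hk0 hkn A At VA VAt lamA lamAt hA hAt hVA hVAt hlamA hlamAt
    hdecA hdecAt hγ1
  have hd2 := dk_core hk0 hkn At A VAt VA lamAt lamA hAt hA hVAt hVA hlamAt hlamA
    hdecAt hdecA hγ2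
  rw [hEeq] at hd2
  have hP := projCol_orth (firstCols_orth hVA hkn.le)
  have hPt := projCol_orth (firstCols_orth hVAt hkn.le)
  rw [d2, hP, hPt]
  have hmax := proj_diff_le (proj_symm (firstCols VA k hkn.le))
    (proj_idem (firstCols_orth hVA hkn.le)) (proj_symm (firstCols VAt k hkn.le))
    (proj_idem (firstCols_orth hVAt hkn.le))
  refine le_trans hmax (max_le ?_ ?_)
  · refine le_trans hd1 ?_
    rw [div_le_div_iff₀ hγ1 hδε]
    have : lamA ⟨k - 1, by omega⟩ - lamA ⟨k, hkn⟩ - spec (A - At)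
        ≤ lamA ⟨k - 1, by omega⟩ - lamAt ⟨k, hkn⟩ := by linarith
    exact mul_le_mul_of_nonneg_left this hεnn
  · refine le_trans hd2 ?_
    rw [div_le_div_iff₀ hγ2 hδε]
    have : lamA ⟨k - 1, by omega⟩ - lamA ⟨k, hkn⟩ - spec (A - At)
        ≤ lamAt ⟨k - 1, by omega⟩ - lamA ⟨k, hkn⟩ := by linarith
    exact mul_le_mul_of_nonneg_left this hεnn


end Main
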